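/- A surcategory (𝓔, A) over 𝔾 is surcomplete if and only if it has surequalizers (𝕁-surlimits for 𝕁 the parallel-pair category) and all small surproducts (𝕁-surlimits for 𝕁 a small discrete category, including the empty one). -/

import Mathlib

open CategoryTheory CategoryTheory.Limits CategoryTheory.MonoidalCategory

universe w w' v u v₁ u₁ v₂ u₂ v₃ u₃ v₄ u₄

namespace Sur

variable {G : Type u} [Category.{v} G]

section Basic

variable {E : Type u₁} [Category.{v₁} E]

/-- A diagram whose composite with the arity functor is constant at `B`. -/
structure ArityConst (A : E ⥤ G) {J : Type w} [Category.{w'} J] (F : J ⥤ E) (B : G) : Prop where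
  obj_eq : ∀ j, A.obj (F.obj j) = B
  map_eq : ∀ {j j'} (f : j ⟶ j'),
    A.map (F.map f) = eqToHom ((obj_eq j).trans (obj_eq j').symm)

/-- A surcone on a diagram whose arity is constant at `B`: a cone together with an arity
morphism under which all legs lie. -/
structure Surcone (A : E ⥤ G) {J : Type w} [Category.{w'} J] (F : J ⥤ E) (B : G)
    (h : ∀ j, A.obj (F.obj j) = B) where
  pt : E
  leg : ∀ j, pt ⟶ F.obj j
  w : ∀ {j j'} (f : j ⟶ j'), leg j ≫ F.map f = leg j'
  arity : A.obj pt ⟶ B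
  fac : ∀ j, A.map (leg j) ≫ eqToHom (h j) = arity

/-- A surcone is a surlimit if its apex is in the fiber over `B`, its arity is the identity,
and every surcone factors through it by a unique morphism. -/
structure IsSurlimit (A : E ⥤ G) {J : Type w} [Category.{w'} J] {F : J ⥤ E} {B : G}
    {h : ∀ j, A.obj (F.obj j) = B} (c : Surcone A F B h) : Prop where
  pt_eq : A.obj c.pt = B
  arity_eq : c.arity = eqToHom pt_eq
  lift : ∀ c' : Surcone A F B h, ∃! f : c'.pt ⟶ c.pt,
    (∀ j, f ≫ c.leg j = c'.leg j) ∧ A.map f ≫ eqToHom pt_eq = c'.arity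

/-- `(E, A)` has `J`-surlimits. -/
def HasSurlimitsOfShape (A : E ⥤ G) (J : Type w) [Category.{w'} J] : Prop :=
  ∀ (F : J ⥤ E) (B : G) (hc : ArityConst A F B),
    ∃ c : Surcone A F B hc.obj_eq, IsSurlimit A c

/-- Dual notion : surcocone. -/
structure Surcocone (A : E ⥤ G) {J : Type w} [Category.{w'} J] (F : J ⥤ E) (B : G)
    (h : ∀ j, A.obj (F.obj j) = B) where
  pt : E
  leg : ∀ j, F.obj j ⟶ pt
  w : ∀ {j j'} (f : j ⟶ j'), F.map f ≫ leg j' = leg j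
  arity : B ⟶ A.obj pt
  fac : ∀ j, eqToHom (h j).symm ≫ A.map (leg j) = arity

structure IsSurcolimit (A : E ⥤ G) {J : Type w} [Category.{w'} J] {F : J ⥤ E} {B : G}
    {h : ∀ j, A.obj (F.obj j) = B} (c : Surcocone A F B h) : Prop where
  pt_eq : A.obj c.pt = B
  arity_eq : c.arity = eqToHom pt_eq.symm
  desc : ∀ c' : Surcocone A F B h, ∃! f : c.pt ⟶ c'.pt,
    (∀ j, c.leg j ≫ f = c'.leg j) ∧ eqToHom pt_eq.symm ≫ A.map f = c'.arity

def HasSurcolimitsOfShape (A : E ⥤ G) (J : Type w) [Category.{w'} J] : Prop :=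
  ∀ (F : J ⥤ E) (B : G) (hc : ArityConst A F B),
    ∃ c : Surcocone A F B hc.obj_eq, IsSurcolimit A c

/-- `(E, A)` has K-equalizers : every parallel pair with equal arity image has an equalizer
lying over an identity of the base. -/
def HasKEqualizers (A : E ⥤ G) : Prop :=
  ∀ ⦃a b : E⦄ (f g : a ⟶ b), A.map f = A.map g →
    ∃ (c : E) (e : c ⟶ a) (hc : A.obj c = A.obj a),
      A.map e = eqToHom hc ∧ e ≫ f = e ≫ g ∧
      ∀ ⦃d : E⦄ (k : d ⟶ a), k ≫ f = k ≫ g → ∃! l : d ⟶ c, l ≫ e = k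

/-- `e` is a surcoequalizer of the pair `(f, g)`. -/
def IsSurcoequalizer (A : E ⥤ G) {a b c : E} (f g : a ⟶ b) (e : b ⟶ c) : Prop :=
  ∃ h : A.obj b = A.obj c, A.map e = eqToHom h ∧ f ≫ e = g ≫ e ∧
    ∀ ⦃d : E⦄ (k : b ⟶ d), f ≫ k = g ≫ k → ∃! l : c ⟶ d, e ≫ l = k

/-- `(E, A)` has surcoequalizers of all parallel pairs lying in one fiber. -/
def HasSurcoequalizers (A : E ⥤ G) : Prop :=
  ∀ ⦃a b : E⦄ (f g : a ⟶ b) (hab : A.obj a = A.obj b),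
    A.map f = eqToHom hab → A.map g = eqToHom hab →
    ∃ (c : E) (e : b ⟶ c), IsSurcoequalizer A f g e

/-- `(E, A)` has surequalizers of all parallel pairs lying in one fiber. -/
def HasSurequalizers (A : E ⥤ G) : Prop :=
  ∀ ⦃a b : E⦄ (f g : a ⟶ b) (hab : A.obj a = A.obj b),
    A.map f = eqToHom hab → A.map g = eqToHom hab →
    ∃ (c : E) (e : c ⟶ a) (hc : A.obj c = A.obj a),
      A.map e = eqToHom hc ∧ e ≫ f = e ≫ g ∧
      ∀ ⦃d : E⦄ (k : d ⟶ a), k ≫ f = k ≫ g → ∃! l : d ⟶ c, l ≫ e = k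

/-- A split surfork : a split fork lying entirely in one fiber. -/
def IsSplitSurfork (A : E ⥤ G) {a b c : E} (f g : a ⟶ b) (h : b ⟶ c) : Prop :=
  (∃ hab : A.obj a = A.obj b, A.map f = eqToHom hab ∧ A.map g = eqToHom hab) ∧
  (∃ hbc : A.obj b = A.obj c, A.map h = eqToHom hbc) ∧
  f ≫ h = g ≫ h ∧
  ∃ (s : c ⟶ b) (t : b ⟶ a),
    (∃ hcb : A.obj c = A.obj b, A.map s = eqToHom hcb) ∧
    (∃ hba : A.obj b = A.obj a, A.map t = eqToHom hba) ∧
    s ≫ h = 𝟙 c ∧ t ≫ f = 𝟙 b ∧ t ≫ g = h ≫ s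

/-- A surinitial object in the fiber over `Gobj`. -/
def Surinitial (A : E ⥤ G) (Gobj : G) (x : E) : Prop :=
  ∃ hx : A.obj x = Gobj, ∀ (d : E) (h : Gobj ⟶ A.obj d),
    ∃! f : x ⟶ d, A.map f = eqToHom hx ≫ h

/-- A surmonad : a monad whose underlying functor, unit and multiplication lie over
identities of the base. -/
structure IsSurmonad (A : E ⥤ G) (T : Monad E) : Prop where
  sur : T.toFunctor ⋙ A = A
  unit_arity : ∀ X : E, A.map (T.η.app X) = eqToHom (Functor.congr_obj sur X).symm
  mul_arity : ∀ X : E, A.map (T.μ.app X) = eqToHom (Functor.congr_obj sur (T.obj X))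

end Basic

section Two

variable {E : Type u₁} [Category.{v₁} E] {E' : Type u₂} [Category.{v₂} E']

/-- An absolute surcoequalizer : a surcoequalizer preserved by every surfunctor. -/
def IsAbsoluteSurcoequalizer.{ua, va, ug, vg, ue, ve} {Gb : Type ug} [Category.{vg} Gb]
    {Eb : Type ue} [Category.{ve} Eb] (A : Eb ⥤ Gb) {a b c : Eb}
    (f g : a ⟶ b) (e : b ⟶ c) : Prop :=
  IsSurcoequalizer A f g e ∧
  ∀ (D : Type ua) [Category.{va} D] (A' : D ⥤ Gb) (Fc : Eb ⥤ D),
    Fc ⋙ A' = A → IsSurcoequalizer A' (Fc.map f) (Fc.map g) (Fc.map e)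

/-- The image of a surcone under a surfunctor. -/
def Surcone.map {A : E ⥤ G} {A' : E' ⥤ G} (Fc : E ⥤ E') (hsur : Fc ⋙ A' = A)
    {J : Type w} [Category.{w'} J] {D : J ⥤ E} {B : G} {h : ∀ j, A.obj (D.obj j) = B}
    (c : Surcone A D B h) :
    Surcone A' (D ⋙ Fc) B (fun j => (Functor.congr_obj hsur (D.obj j)).trans (h j)) where
  pt := Fc.obj c.pt
  leg j := Fc.map (c.leg j)
  w {j j'} f := by
    dsimp only [Functor.comp_map]
    rw [← Fc.map_comp, c.w f]
  arity := eqToHom (Functor.congr_obj hsur c.pt) ≫ c.arity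
  fac j := by
    have h1 := Functor.congr_hom hsur (c.leg j)
    dsimp only [Functor.comp_map] at h1
    rw [h1, Category.assoc, Category.assoc, eqToHom_trans, c.fac j]

/-- The image of a surcocone under a surfunctor. -/
def Surcocone.map {A : E ⥤ G} {A' : E' ⥤ G} (Fc : E ⥤ E') (hsur : Fc ⋙ A' = A)
    {J : Type w} [Category.{w'} J] {D : J ⥤ E} {B : G} {h : ∀ j, A.obj (D.obj j) = B}
    (c : Surcocone A D B h) :
    Surcocone A' (D ⋙ Fc) B (fun j => (Functor.congr_obj hsur (D.obj j)).trans (h j)) where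
  pt := Fc.obj c.pt
  leg j := Fc.map (c.leg j)
  w {j j'} f := by
    dsimp only [Functor.comp_map]
    rw [← Fc.map_comp, c.w f]
  arity := c.arity ≫ eqToHom (Functor.congr_obj hsur c.pt).symm
  fac j := by
    have h1 := Functor.congr_hom hsur (c.leg j)
    dsimp only [Functor.comp_map] at h1
    rw [h1, eqToHom_trans_assoc, ← Category.assoc, c.fac j]

/-- A surfunctor preserves `J`-surlimits. -/
def PreservesSurlimitsOfShape {A : E ⥤ G} {A' : E' ⥤ G} (Fc : E ⥤ E') (hsur : Fc ⋙ A' = A)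
    (J : Type w) [Category.{w'} J] : Prop :=
  ∀ (D : J ⥤ E) (B : G) (hc : ArityConst A D B) (c : Surcone A D B hc.obj_eq),
    IsSurlimit A c → IsSurlimit A' (c.map Fc hsur)

/-- A surfunctor preserves `J`-surcolimits. -/
def PreservesSurcolimitsOfShape {A : E ⥤ G} {A' : E' ⥤ G} (Fc : E ⥤ E') (hsur : Fc ⋙ A' = A)
    (J : Type w) [Category.{w'} J] : Prop :=
  ∀ (D : J ⥤ E) (B : G) (hc : ArityConst A D B) (c : Surcocone A D B hc.obj_eq),
    IsSurcolimit A c → IsSurcolimit A' (c.map Fc hsur)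

/-- A surfunctor preserves K-equalizers. -/
def PreservesKEqualizers {A : E ⥤ G} {A' : E' ⥤ G} (Fc : E ⥤ E')
    (_hsur : Fc ⋙ A' = A) : Prop :=
  ∀ ⦃a b c : E⦄ (f g : a ⟶ b) (e : c ⟶ a) (hc : A.obj c = A.obj a),
    A.map f = A.map g → A.map e = eqToHom hc → e ≫ f = e ≫ g →
    (∀ ⦃d : E⦄ (k : d ⟶ a), k ≫ f = k ≫ g → ∃! l : d ⟶ c, l ≫ e = k) →
    (Fc.map e ≫ Fc.map f = Fc.map e ≫ Fc.map g ∧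
     ∀ ⦃d : E'⦄ (k : d ⟶ Fc.obj a), k ≫ Fc.map f = k ≫ Fc.map g →
       ∃! l : d ⟶ Fc.obj c, l ≫ Fc.map e = k)

/-- A suradjunction : an adjunction between surfunctors whose unit and counit lie over
identities of the base. -/
structure IsSuradjunction (A' : E' ⥤ G) (A : E ⥤ G) (Fl : E' ⥤ E) (Fr : E ⥤ E')
    (adj : Fl ⊣ Fr) : Prop where
  left_sur : Fl ⋙ A = A'
  right_sur : Fr ⋙ A' = A
  unit_arity : ∀ X : E', A'.map (adj.unit.app X) =
    eqToHom (((Functor.congr_obj right_sur (Fl.obj X)).trans (Functor.congr_obj left_sur X)).symm)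
  counit_arity : ∀ Y : E, A.map (adj.counit.app Y) =
    eqToHom ((Functor.congr_obj left_sur (Fr.obj Y)).trans (Functor.congr_obj right_sur Y))

/-- `U` creates surcoequalizers of the parallel pair `(f, g)`. -/
def CreatesSurcoequalizersOf (A : E ⥤ G) (A' : E' ⥤ G) (U : E ⥤ E')
    {a b : E} (f g : a ⟶ b) : Prop :=
  ∀ (c : E') (e : U.obj b ⟶ c), IsSurcoequalizer A' (U.map f) (U.map g) e →
    ∃ (z : E) (q : b ⟶ z) (hz : U.obj z = c),
      U.map q = e ≫ eqToHom hz.symm ∧ IsSurcoequalizer A f g q ∧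
      ∀ (z' : E) (q' : b ⟶ z') (hz' : U.obj z' = c),
        U.map q' = e ≫ eqToHom hz'.symm →
        ∃ hzz : z = z', q' = q ≫ eqToHom hzz

/-- The solution set condition for an object `B` relative to a surfunctor `Fc`. -/
def SolutionSet (A' : E' ⥤ G) (Fc : E ⥤ E') (B : E') : Prop :=
  ∃ (I : Type w) (obj : I → E) (bi : ∀ i, B ⟶ Fc.obj (obj i))
    (hι : ∀ i, A'.obj B = A'.obj (Fc.obj (obj i))),
    (∀ i, A'.map (bi i) = eqToHom (hι i)) ∧
    ∀ (a : E) (b : B ⟶ Fc.obj a), ∃ (i : I) (x : obj i ⟶ a), bi i ≫ Fc.map x = b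

/-- A fusionnable suradjunction (condition on the right adjoint surfunctor `U`). -/
def Fusionnable {Ac : E ⥤ G} {Ab : E' ⥤ G} (U : E ⥤ E') (hU : U ⋙ Ab = Ac) : Prop :=
  HasSurcoequalizers Ac ∧ HasSurcolimitsOfShape Ac ℕ ∧ HasSurcolimitsOfShape Ab ℕ ∧
  U.Faithful ∧ PreservesSurcolimitsOfShape U hU ℕ

/-- A `κ`-filtered category : every diagram of size `< κ` admits a cocone. -/
def IsCardinalFilteredCat (J : Type w) [Category.{w} J] (κ : Cardinal.{w}) : Prop :=
  ∀ (K : Type w) [SmallCategory K], Cardinal.mk K < κ →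
    Cardinal.mk ((k : K) × (k' : K) × (k ⟶ k')) < κ →
    ∀ D : K ⥤ J, ∃ (j : J) (cc : ∀ k, D.obj k ⟶ j),
      ∀ {k k'} (f : k ⟶ k'), D.map f ≫ cc k' = cc k

end Two

section Pullback

variable {E : Type u₁} [Category.{v₁} E] {E' : Type u₂} [Category.{v₂} E']
  {Bc : Type u₃} [Category.{v₃} Bc]

/-- The strict pullback of two functors `U : E ⥤ Bc` and `V : E' ⥤ Bc`. -/
structure CatPullback (U : E ⥤ Bc) (V : E' ⥤ Bc) where
  left : E
  right : E'
  eq : U.obj left = V.obj right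

@[ext]
structure CatPullbackHom (U : E ⥤ Bc) (V : E' ⥤ Bc) (X Y : CatPullback U V) where
  left : X.left ⟶ Y.left
  right : X.right ⟶ Y.right
  w : U.map left = eqToHom X.eq ≫ V.map right ≫ eqToHom Y.eq.symm

instance (U : E ⥤ Bc) (V : E' ⥤ Bc) : Category (CatPullback U V) where
  Hom X Y := CatPullbackHom U V X Y
  id X := ⟨𝟙 _, 𝟙 _, by simp⟩
  comp f g := ⟨f.left ≫ g.left, f.right ≫ g.right, by simp [f.w, g.w]⟩
  id_comp f := by apply CatPullbackHom.ext <;> simp [CategoryStruct.comp, CategoryStruct.id]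
  comp_id f := by apply CatPullbackHom.ext <;> simp [CategoryStruct.comp, CategoryStruct.id]
  assoc f g h := by apply CatPullbackHom.ext <;> simp [CategoryStruct.comp]

/-- The canonical functor from the strict pullback of `U` and `V` to their common codomain. -/
def Ofun (U : E ⥤ Bc) (V : E' ⥤ Bc) : CatPullback U V ⥤ Bc where
  obj X := U.obj X.left
  map f := U.map f.left
  map_id X := by
    show U.map (𝟙 X.left) = _
    simp
  map_comp f g := by
    show U.map (_ ≫ _) = _
    simp

/-- The arity functor on the comma category `B ↓ Fc` of a surfunctor `Fc`. -/
def commaArity {A : E ⥤ G} {A' : E' ⥤ G} (Fc : E ⥤ E') (hsur : Fc ⋙ A' = A) (B : E') :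
    StructuredArrow B Fc ⥤ Under (A'.obj B) where
  obj p := Under.mk (A'.map p.hom ≫ eqToHom (Functor.congr_obj hsur p.right))
  map {p q} f := Under.homMk (A.map f.right) (by
    have hw : p.hom ≫ Fc.map f.right = q.hom := StructuredArrow.w f
    have h1 := Functor.congr_hom hsur f.right
    dsimp only [Functor.comp_map] at h1
    dsimp [Under.mk]
    have h2 : eqToHom (Functor.congr_obj hsur p.right) ≫ A.map f.right
        = A'.map (Fc.map f.right) ≫ eqToHom (Functor.congr_obj hsur q.right) := by
      rw [h1]; simp
    rw [Category.assoc, h2, ← Category.assoc, ← A'.map_comp, hw])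

end Pullback

universe s

section ParallelAux

inductive PP : Type s where | z | o

inductive PPHom : PP.{s} → PP.{s} → Type s where
  | id (x : PP) : PPHom x x
  | l : PPHom .z .o
  | r : PPHom .z .o

def PPcomp : ∀ {x y zz : PP.{s}}, PPHom x y → PPHom y zz → PPHom x zz
  | _, _, _, .id _, g => g
  | _, _, _, .l, .id _ => .l
  | _, _, _, .r, .id _ => .r

instance : SmallCategory PP.{s} where
  Hom := PPHom
  id := PPHom.id
  comp := PPcomp
  id_comp f := rfl
  comp_id f := by cases f <;> rfl
  assoc f g h := by cases f <;> cases g <;> cases h <;> rfl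

@[reducible]
def PPdiag {C : Type*} [Category C] {a b : C} (f g : a ⟶ b) : PP.{s} ⥤ C where
  obj x := match x with | .z => a | .o => b
  map {x y} φ := match φ with | .id _ => 𝟙 _ | .l => f | .r => g
  map_id x := rfl
  map_comp {x y zz} φ ψ := by
    change PPHom x y at φ; change PPHom y zz at ψ
    cases φ <;> cases ψ <;> (show _ = _ ≫ _) <;> simp [CategoryStruct.comp, PPcomp]

end ParallelAux


/-- A surcategory is surcomplete iff it has surequalizers and all small surproducts. -/
theorem surcomplete_iff_surequalizers_and_surproducts
    {G : Type u} [Category.{v} G] {E : Type u₁} [Category.{v₁} E] (A : E ⥤ G) :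
    (∀ (J : Type s) [SmallCategory J], HasSurlimitsOfShape A J) ↔
      (HasSurequalizers A ∧
       ∀ (I : Type s) (obj : I → E) (B : G) (h : ∀ i, A.obj (obj i) = B),
         ∃ (p : E) (pr : ∀ i, p ⟶ obj i) (hp : A.obj p = B),
           (∀ i, A.map (pr i) ≫ eqToHom (h i) = eqToHom hp) ∧
           ∀ (y : E) (k : ∀ i, y ⟶ obj i) (β : A.obj y ⟶ B),
             (∀ i, A.map (k i) ≫ eqToHom (h i) = β) →
             ∃! fm : y ⟶ p, (∀ i, fm ≫ pr i = k i) ∧ A.map fm ≫ eqToHom hp = β) := by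
  constructor
  · intro hsl
    constructor
    · -- surequalizers
      intro a b f g hab hf hg
      have hc : ArityConst A (PPdiag.{s} f g) (A.obj a) := by
        refine ⟨fun j => by cases j <;> [exact rfl; exact hab.symm], ?_⟩
        intro j j' φ
        change PPHom j j' at φ
        cases φ
        · show A.map (𝟙 _) = _
          simp
        · exact hf
        · exact hg
      obtain ⟨c, hlim⟩ := hsl PP (PPdiag f g) (A.obj a) hc
      have eA : A.map (c.leg .z) = eqToHom hlim.pt_eq := by
        have h1 := c.fac PP.z
        rw [hlim.arity_eq] at h1
        have e0 : eqToHom (hc.obj_eq PP.z) = 𝟙 (A.obj ((PPdiag.{s} f g).obj PP.z)) :=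
          eqToHom_refl _ _
        rw [e0, Category.comp_id] at h1
        exact h1
      refine ⟨c.pt, c.leg .z, hlim.pt_eq, eA,
        (c.w PPHom.l).trans (c.w PPHom.r).symm, ?_⟩
      intro d k hk
      obtain ⟨l, ⟨hl1, hl2⟩, hlu⟩ := hlim.lift
        { pt := d
          leg := fun j => match j with | .z => k | .o => k ≫ f
          w := fun {j j'} φ => by
            change PPHom j j' at φ
            cases φ
            · show _ ≫ 𝟙 _ = _
              simp
            · rfl
            · exact hk.symm
          arity := A.map k
          fac := fun j => by
            cases j
            · have e0 : eqToHom (hc.obj_eq PP.z) = 𝟙 (A.obj ((PPdiag.{s} f g).obj PP.z)) :=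
                eqToHom_refl _ _
              rw [e0, Category.comp_id]
            · show A.map (k ≫ f) ≫ eqToHom _ = A.map k
              rw [A.map_comp, Category.assoc, hf, eqToHom_trans]
              have e0 : eqToHom (hab.trans (hc.obj_eq PP.o)) = 𝟙 (A.obj a) := eqToHom_refl _ _
              rw [e0, Category.comp_id] }
      refine ⟨l, hl1 PP.z, fun l' hl' => hlu l' ⟨fun j => ?_, ?_⟩⟩
      · cases j
        · exact hl'
        · show l' ≫ c.leg PP.o = k ≫ f
          rw [← c.w PPHom.l, ← Category.assoc, hl']
      · show A.map l' ≫ eqToHom hlim.pt_eq = A.map k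
        rw [← eA, ← A.map_comp, hl']
    · -- surproducts
      intro I obj B h
      have hc : ArityConst A (Discrete.functor obj) B := by
        refine ⟨fun j => h j.as, ?_⟩
        intro j j' φ
        obtain ⟨i⟩ := j; obtain ⟨i'⟩ := j'
        obtain ⟨⟨hφ⟩⟩ := φ
        cases hφ
        show A.map ((Discrete.functor obj).map (𝟙 _)) = _
        simp
      obtain ⟨c, hlim⟩ := hsl (Discrete I) (Discrete.functor obj) B hc
      refine ⟨c.pt, fun i => c.leg ⟨i⟩, hlim.pt_eq, fun i => ?_, ?_⟩
      · have h1 := c.fac ⟨i⟩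
        rw [hlim.arity_eq] at h1
        exact h1
      · intro y k β hk
        obtain ⟨fm, ⟨hf1, hf2⟩, hfu⟩ := hlim.lift
          { pt := y
            leg := fun j => k j.as
            w := fun {j j'} φ => by
              obtain ⟨i⟩ := j; obtain ⟨i'⟩ := j'
              obtain ⟨⟨hφ⟩⟩ := φ
              cases hφ
              show k i ≫ (Discrete.functor obj).map (𝟙 _) = k i
              simp
            arity := β
            fac := fun j => hk j.as }
        exact ⟨fm, ⟨fun i => hf1 ⟨i⟩, hf2⟩,
          fun f' hf' => hfu f' ⟨fun j => hf'.1 j.as, hf'.2⟩⟩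
  · rintro ⟨he, hprod⟩
    intro J _ D B hc
    obtain ⟨p, pr, hp, hpr, hpuniv⟩ := hprod J (fun j => D.obj j) B hc.obj_eq
    obtain ⟨q, qr, hq, hqr, hquniv⟩ := hprod ((j : J) × (j' : J) × (j ⟶ j'))
      (fun i => D.obj i.2.1) B (fun i => hc.obj_eq i.2.1)
    obtain ⟨s, ⟨hs1, hs2⟩, hsu⟩ := hquniv p (fun i => pr i.2.1) (eqToHom hp)
      (fun i => hpr i.2.1)
    obtain ⟨t, ⟨ht1, ht2⟩, htu⟩ := hquniv p (fun i => pr i.1 ≫ D.map i.2.2) (eqToHom hp)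
      (fun i => by
        rw [A.map_comp, hc.map_eq i.2.2, Category.assoc, eqToHom_trans]
        exact hpr i.1)
    have hsA : A.map s = eqToHom (hp.trans hq.symm) := by
      have h1 : A.map s ≫ eqToHom hq ≫ eqToHom hq.symm = eqToHom hp ≫ eqToHom hq.symm := by
        rw [← Category.assoc, hs2]
      simpa using h1
    have htA : A.map t = eqToHom (hp.trans hq.symm) := by
      have h1 : A.map t ≫ eqToHom hq ≫ eqToHom hq.symm = eqToHom hp ≫ eqToHom hq.symm := by
        rw [← Category.assoc, ht2]
      simpa using h1
    obtain ⟨c, e, hcp, heA, heq, heuniv⟩ := he s t (hp.trans hq.symm) hsA htA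
    have hw : ∀ {j j' : J} (φ : j ⟶ j'), (e ≫ pr j) ≫ D.map φ = e ≫ pr j' := by
      intro j j' φ
      have h1 : (e ≫ s) ≫ qr ⟨j, j', φ⟩ = e ≫ pr j' := by
        rw [Category.assoc, hs1 ⟨j, j', φ⟩]
      have h2 : (e ≫ t) ≫ qr ⟨j, j', φ⟩ = e ≫ (pr j ≫ D.map φ) := by
        rw [Category.assoc, ht1 ⟨j, j', φ⟩]
      rw [Category.assoc, ← h2, ← heq, h1]
    refine ⟨{ pt := c
              leg := fun j => e ≫ pr j
              w := fun φ => hw φ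
              arity := eqToHom (hcp.trans hp)
              fac := fun j => by
                rw [A.map_comp, heA, Category.assoc, hpr j, eqToHom_trans] }, ?_⟩
    refine ⟨hcp.trans hp, rfl, ?_⟩
    intro c'
    obtain ⟨m, ⟨hm1, hm2⟩, hmu⟩ := hpuniv c'.pt c'.leg c'.arity c'.fac
    obtain ⟨n, _, hnu⟩ := hquniv c'.pt (fun i => c'.leg i.2.1) c'.arity
      (fun i => c'.fac i.2.1)
    have hms : m ≫ s = m ≫ t := by
      have e1 : m ≫ s = n := hnu _ ⟨fun i => by rw [Category.assoc, hs1 i, hm1], by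
        rw [A.map_comp, Category.assoc, hs2]; exact hm2⟩
      have e2 : m ≫ t = n := hnu _ ⟨fun i => by
          rw [Category.assoc, ht1 i, ← Category.assoc, hm1, c'.w], by
        rw [A.map_comp, Category.assoc, ht2]; exact hm2⟩
      rw [e1, e2]
    obtain ⟨l, hl, hlu⟩ := heuniv m hms
    refine ⟨l, ⟨fun j => by rw [← Category.assoc, hl, hm1], ?_⟩, ?_⟩
    · show A.map l ≫ eqToHom _ = c'.arity
      rw [← eqToHom_trans hcp hp, ← heA, ← Category.assoc, ← A.map_comp, hl]
      exact hm2
    · rintro f' ⟨hf1, hf2⟩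
      refine hlu f' (hmu _ ⟨fun j => by rw [Category.assoc]; exact hf1 j, ?_⟩)
      rw [A.map_comp, heA, Category.assoc, eqToHom_trans]
      exact hf2


end Sur
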